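/- Every finite noncyclic group has at least three nonpower subgroups. -/

import Mathlib

/-- The power subgroup `G^m`: the subgroup generated by all `m`-th powers. -/
def powSub (G : Type*) [Group G] (m : ℕ) : Subgroup G :=
  Subgroup.closure {x : G | ∃ g : G, g ^ m = x}

/-- A subgroup is a nonpower subgroup if it is not `G^m` for any `m ≥ 1`. -/
def IsNonpower {G : Type*} [Group G] (H : Subgroup G) : Prop :=
  ¬ ∃ m : ℕ, 0 < m ∧ H = powSub G m

/-- The number of nonpower subgroups of `G`. -/
noncomputable def nps (G : Type*) [Group G] : ℕ :=
  Nat.card {H : Subgroup G // IsNonpower H}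

/-- The number of power subgroups of `G`. -/
noncomputable def ps (G : Type*) [Group G] : ℕ :=
  Nat.card {H : Subgroup G // ∃ m : ℕ, 0 < m ∧ H = powSub G m}

/-- The total number of subgroups of `G`. -/
noncomputable def numSubgroups (G : Type*) [Group G] : ℕ :=
  Nat.card (Subgroup G)

open Subgroup

section Aux

theorem powSub_normal (G : Type*) [Group G] (m : ℕ) : (powSub G m).Normal := by
  constructor
  intro n hn g
  have : (MulAut.conj g).toMonoidHom '' {x : G | ∃ g : G, g ^ m = x} ⊆
      {x : G | ∃ g : G, g ^ m = x} := by
    rintro _ ⟨x, ⟨y, rfl⟩, rfl⟩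
    exact ⟨g * y * g⁻¹, by simp [MulAut.conj, ← conj_pow]⟩
  have h2 := Subgroup.map_le_iff_le_comap.mp
    (le_trans (le_of_eq (MonoidHom.map_closure _ _)) (Subgroup.closure_mono this))
  exact h2 hn

theorem nonpower_of_not_normal {G : Type*} [Group G] {H : Subgroup G}
    (h : ¬ H.Normal) : IsNonpower H := by
  rintro ⟨m, _, rfl⟩
  exact h (powSub_normal G m)

theorem three_distinct_nps {G : Type*} [Group G] [Finite G] {H1 H2 H3 : Subgroup G}
    (h1 : IsNonpower H1) (h2 : IsNonpower H2) (h3 : IsNonpower H3)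
    (h12 : H1 ≠ H2) (h13 : H1 ≠ H3) (h23 : H2 ≠ H3) : 3 ≤ nps G := by
  have hf : Function.Injective (fun i : Fin 3 =>
      (![⟨H1, h1⟩, ⟨H2, h2⟩, ⟨H3, h3⟩] i : {H : Subgroup G // IsNonpower H})) := by
    intro a b hab
    fin_cases a <;> fin_cases b <;>
      simp_all [Subtype.ext_iff] <;>
      first
        | rfl
        | exact absurd hab h12 | exact absurd hab h13 | exact absurd hab h23
        | exact absurd hab.symm h12 | exact absurd hab.symm h13 | exact absurd hab.symm h23
  have := Nat.card_le_card_of_injective _ hf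
  simpa [nps] using this

theorem sylow_normal_of_subsingleton {G : Type*} [Group G] {p : ℕ} [Fact p.Prime]
    (P : Sylow p G) (hs : Subsingleton (Sylow p G)) : (P : Subgroup G).Normal := by
  refine Subgroup.normalizer_eq_top_iff.mp ((Subgroup.eq_top_iff' _).mpr fun g => ?_)
  have : g • P = P := Subsingleton.elim _ _
  exact Sylow.smul_eq_iff_mem_normalizer.mp this

/-! ### Case A : a non-normal Sylow subgroup -/

theorem case_nonnormal_sylow {G : Type*} [Group G] [Finite G] (p : ℕ) [Fact p.Prime]
    (P : Sylow p G) (hP : ¬ (P : Subgroup G).Normal) : 3 ≤ nps G := by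
  have hcard : 3 ≤ Nat.card (Sylow p G) := by
    have hmod := card_sylow_modEq_one p G
    have hpos : 0 < Nat.card (Sylow p G) := Nat.card_pos
    have hne : Nat.card (Sylow p G) ≠ 1 := by
      intro h1
      obtain ⟨hs, -⟩ := Nat.card_eq_one_iff_unique.mp h1
      exact hP (sylow_normal_of_subsingleton P hs)
    have hdvd : p ∣ Nat.card (Sylow p G) - 1 := (Nat.modEq_iff_dvd' hpos).mp hmod.symm
    have h2 : 2 ≤ p := (Fact.out : p.Prime).two_le
    have h3 : Nat.card (Sylow p G) - 1 ≠ 0 := by omega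
    have := Nat.le_of_dvd (Nat.pos_of_ne_zero h3) hdvd
    omega
  refine le_trans hcard (Nat.card_le_card_of_injective (fun Q : Sylow p G =>
    (⟨(Q : Subgroup G), by
      refine nonpower_of_not_normal fun hQ => hP ?_
      have hs : Subsingleton (Sylow p G) := (Sylow.unique_of_normal Q hQ).instSubsingleton
      exact sylow_normal_of_subsingleton P hs⟩ : {H : Subgroup G // IsNonpower H})) ?_)
  intro Q R hQR
  exact Sylow.ext (congrArg Subtype.val hQR)

/-! ### All Sylow subgroups normal and cyclic : `G` is cyclic -/

theorem nat_prod_dvd {ι : Type*} {n : ℕ} (s : Finset ι) (f : ι → ℕ)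
    (hcop : ∀ i ∈ s, ∀ j ∈ s, i ≠ j → (f i).Coprime (f j))
    (hdvd : ∀ i ∈ s, f i ∣ n) : (∏ i ∈ s, f i) ∣ n := by
  induction s using Finset.cons_induction with
  | empty => simp
  | cons a s ha ih =>
    rw [Finset.prod_cons]
    refine Nat.Coprime.mul_dvd_of_dvd_of_dvd ?_ (hdvd a (by simp)) ?_
    · exact Nat.Coprime.prod_right fun j hj =>
        hcop a (by simp) j (by simp [hj]) (fun h => ha (h ▸ hj))
    · exact ih (fun i hi j hj hij => hcop i (by simp [hi]) j (by simp [hj]) hij)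
        (fun i hi => hdvd i (by simp [hi]))

theorem pi_isCyclic {ι : Type*} [Fintype ι] (f : ι → Type*) [∀ i, Group (f i)]
    [∀ i, Finite (f i)] (hcyc : ∀ i, IsCyclic (f i))
    (hcop : ∀ i j, i ≠ j → (Nat.card (f i)).Coprime (Nat.card (f j))) :
    IsCyclic (∀ i, f i) := by
  choose g hg using fun i => (hcyc i).exists_generator
  have hord : ∀ i, orderOf (g i) = Nat.card (f i) := fun i =>
    orderOf_eq_card_of_forall_mem_zpowers (hg i)
  refine isCyclic_of_orderOf_eq_card (fun i => g i) ?_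
  have hdvd : ∀ i, Nat.card (f i) ∣ orderOf (fun i => g i : ∀ i, f i) := by
    intro i
    rw [← hord i]
    exact orderOf_map_dvd (Pi.evalMonoidHom f i) _
  have h1 : (∏ i, Nat.card (f i)) ∣ orderOf (fun i => g i : ∀ i, f i) :=
    nat_prod_dvd _ _ (fun i _ j _ hij => hcop i j hij) (fun i _ => hdvd i)
  have h2 : orderOf (fun i => g i : ∀ i, f i) ∣ Nat.card (∀ i, f i) := orderOf_dvd_natCard _
  rw [Nat.card_pi] at h2
  rw [Nat.card_pi]
  exact Nat.dvd_antisymm h2 h1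

theorem cyclic_of_sylow {G : Type*} [Group G] [Finite G]
    (hn : ∀ (p : ℕ) (_ : Fact p.Prime) (P : Sylow p G), (P : Subgroup G).Normal)
    (hc : ∀ (p : ℕ) (_ : Fact p.Prime) (P : Sylow p G), IsCyclic P) : IsCyclic G := by
  have e := Sylow.directProductOfNormal (G := G) (fun {p hp} P => hn p hp P)
  haveI : ∀ p : (Nat.card G).primeFactors, Fact (Nat.Prime (p : ℕ)) :=
    fun p => Fact.mk (Nat.prime_of_mem_primeFactors p.2)
  have hpg : ∀ p : (Nat.card G).primeFactors,
      IsPGroup (p : ℕ) (∀ P : Sylow (p : ℕ) G, P) := by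
    intro p
    haveI : Subsingleton (Sylow (p : ℕ) G) :=
      (Sylow.unique_of_normal (default : Sylow (p : ℕ) G) (hn _ inferInstance _)).instSubsingleton
    haveI : Unique (Sylow (p : ℕ) G) := Unique.mk' _
    exact (Sylow.isPGroup' _).of_equiv
      (MulEquiv.piUnique (fun P : Sylow (p : ℕ) G => (P : Type _))).symm
  have key : IsCyclic (∀ p : (Nat.card G).primeFactors, ∀ P : Sylow (p : ℕ) G, P) := by
    refine pi_isCyclic _ ?_ ?_
    · intro p
      haveI : Subsingleton (Sylow (p : ℕ) G) :=
        (Sylow.unique_of_normal (default : Sylow (p : ℕ) G) (hn _ inferInstance _)).instSubsingleton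
      haveI : Unique (Sylow (p : ℕ) G) := Unique.mk' _
      exact isCyclic_of_surjective (hH := hc (p : ℕ) inferInstance _)
        (MulEquiv.piUnique (fun P : Sylow (p : ℕ) G => (P : Type _))).symm
        (MulEquiv.piUnique (fun P : Sylow (p : ℕ) G => (P : Type _))).symm.surjective
    · intro p q hpq
      obtain ⟨a, ha⟩ := (IsPGroup.iff_card).mp (hpg p)
      obtain ⟨b, hb⟩ := (IsPGroup.iff_card).mp (hpg q)
      rw [ha, hb]
      refine Nat.Coprime.pow _ _ (Nat.coprime_primes ?_ ?_ |>.mpr ?_)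
      · exact Nat.prime_of_mem_primeFactors p.2
      · exact Nat.prime_of_mem_primeFactors q.2
      · exact fun h => hpq (Subtype.ext h)
  exact isCyclic_of_surjective e e.surjective

/-! ### p-group lemmas -/

open scoped commutatorElement in
theorem coatom_facts {Q : Type*} [Group Q] [Finite Q] {p : ℕ} [Fact p.Prime]
    (hQ : IsPGroup p Q) {M : Subgroup Q} (hM : IsCoatom M) :
    (∀ x : Q, x ^ p ∈ M) ∧ (∀ a b : Q, ⁅a, b⁆ ∈ M) := by
  haveI hnilp : Group.IsNilpotent Q := hQ.isNilpotent
  have hco := ((isNilpotent_of_finite_tfae (G := Q)).out 0 2).mp hnilp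
  haveI hMn : M.Normal := hco M hM
  set π := QuotientGroup.mk' M with hπ
  have hsurj : Function.Surjective π := QuotientGroup.mk'_surjective M
  have hmem : ∀ x : Q, π x = 1 → x ∈ M := by
    intro x hx
    have : x ∈ π.ker := (MonoidHom.mem_ker).mpr hx
    rwa [QuotientGroup.ker_mk'] at this
  have hmem' : ∀ x : Q, x ∈ M → π x = 1 := by
    intro x hx
    have : x ∈ π.ker := by rw [QuotientGroup.ker_mk']; exact hx
    exact (MonoidHom.mem_ker).mp this
  have hsub : ∀ S : Subgroup (Q ⧸ M), S = ⊥ ∨ S = ⊤ := by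
    intro S
    rcases eq_or_ne S ⊥ with hS | hS
    · exact Or.inl hS
    · right
      obtain ⟨⟨a, haS⟩, ha1⟩ := Subgroup.ne_bot_iff_exists_ne_one.mp hS
      obtain ⟨q, rfl⟩ := hsurj a
      have hq : q ∈ comap π S := haS
      have hqM : q ∉ M := fun hqM => ha1 (Subtype.ext (hmem' q hqM))
      have hlt : M < comap π S := by
        refine lt_of_le_of_ne (fun x hx => ?_) (fun he => hqM (he ▸ hq))
        have : π x = 1 := hmem' x hx
        simpa [Subgroup.mem_comap, this] using one_mem S
      have htop := hM.2 _ hlt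
      rw [← map_comap_eq_self_of_surjective hsurj S, htop]
      exact Subgroup.map_top_of_surjective π hsurj
  have hQM : IsPGroup p (Q ⧸ M) := hQ.to_quotient M
  haveI : Nontrivial (Q ⧸ M) := by
    rcases subsingleton_or_nontrivial (Q ⧸ M) with hs | hn
    · exact absurd (top_unique fun x _ => hmem x (Subsingleton.elim _ _)) hM.1
    · exact hn
  have hcard : Nat.card (Q ⧸ M) = p := by
    have hdvd : p ∣ Nat.card (Q ⧸ M) := by
      obtain ⟨n, hn⟩ := IsPGroup.iff_card.mp hQM
      rcases Nat.eq_zero_or_pos n with h0 | h0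
      · rw [h0, pow_zero] at hn
        exact absurd (Nat.card_eq_one_iff_unique.mp hn).1 (not_subsingleton _)
      · rw [hn]; exact dvd_pow_self p h0.ne'
    obtain ⟨g, hg⟩ := exists_prime_orderOf_dvd_card' (G := Q ⧸ M) p hdvd
    have hg1 : g ≠ 1 := by
      intro h
      rw [h, orderOf_one] at hg
      exact (Fact.out : p.Prime).one_lt.ne' hg.symm
    have hz : zpowers g = ⊤ := by
      rcases hsub (zpowers g) with h | h
      · exact absurd (h ▸ mem_zpowers g) (by simp [hg1])
      · exact h
    have h1 := Nat.card_zpowers g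
    rw [hz, Subgroup.card_top, hg] at h1
    exact h1
  constructor
  · intro x
    have h1 : (π x) ^ p = 1 := by rw [← hcard]; exact pow_card_eq_one'
    exact hmem _ (by simpa using h1)
  · intro a b
    haveI : IsCyclic (Q ⧸ M) := isCyclic_of_prime_card hcard
    have hcomm : ∀ u v : Q ⧸ M, u * v = v * u := fun u v => (IsCyclic.commGroup).mul_comm u v
    refine hmem _ ?_
    rw [commutatorElement_def]
    simp only [map_mul, map_inv]
    rw [hcomm (π a) (π b)]
    group

theorem pgroup_three {Q : Type*} [Group Q] [Finite Q] {p : ℕ} [Fact p.Prime]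
    (hQ : IsPGroup p Q) (hnc : ¬ IsCyclic Q) :
    ∃ N₁ N₂ N₃ : Subgroup Q,
      (powSub Q p ⊔ commutator Q < N₁ ∧ N₁ ≠ ⊤) ∧
      (powSub Q p ⊔ commutator Q < N₂ ∧ N₂ ≠ ⊤) ∧
      (powSub Q p ⊔ commutator Q < N₃ ∧ N₃ ≠ ⊤) ∧
      N₁ ≠ N₂ ∧ N₁ ≠ N₃ ∧ N₂ ≠ N₃ := by
  set K : Subgroup Q := powSub Q p ⊔ commutator Q with hK
  haveI : (powSub Q p).Normal := powSub_normal Q p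
  haveI : K.Normal := Subgroup.sup_normal _ _
  set π := QuotientGroup.mk' K with hπ
  have hsurj : Function.Surjective π := QuotientGroup.mk'_surjective K
  have hmem : ∀ x : Q, π x = 1 → x ∈ K := by
    intro x hx
    have : x ∈ π.ker := (MonoidHom.mem_ker).mpr hx
    rwa [QuotientGroup.ker_mk'] at this
  have hmem' : ∀ x : Q, x ∈ K → π x = 1 := by
    intro x hx
    have : x ∈ π.ker := by rw [QuotientGroup.ker_mk']; exact hx
    exact (MonoidHom.mem_ker).mp this
  have hng : ∀ x : Q, zpowers x ⊔ K = ⊤ → zpowers x = ⊤ := by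
    intro x hx
    rcases eq_top_or_exists_le_coatom (zpowers x) with h | ⟨M, hM, hle⟩
    · exact h
    · exfalso
      obtain ⟨h1, h2⟩ := coatom_facts hQ hM
      have hKM : K ≤ M := by
        rw [hK]
        refine sup_le ?_ ?_
        · rw [powSub]
          refine Subgroup.closure_le M |>.mpr ?_
          rintro _ ⟨y, rfl⟩
          exact h1 y
        · rw [_root_.commutator_def]
          exact (Subgroup.commutator_le).mpr fun g _ h _ => h2 g h
      exact hM.1 (top_unique (hx ▸ sup_le hle hKM))
  have hVcyc : ∀ v : Q ⧸ K, zpowers v = ⊤ → False := by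
    intro v hv
    obtain ⟨x, rfl⟩ := hsurj v
    have hx : zpowers x ⊔ K = ⊤ := by
      rw [eq_top_iff]
      intro q _
      have : π q ∈ zpowers (π x) := hv ▸ mem_top _
      obtain ⟨n, hn⟩ := this
      have hn' : π x ^ n = π q := hn
      have hqK : q * (x ^ n)⁻¹ ∈ K := by
        refine hmem _ ?_
        rw [map_mul, map_inv, map_zpow, hn']
        group
      have hq : q = x ^ n * ((x ^ n)⁻¹ * q) := by group
      rw [hq]
      refine mul_mem ((le_sup_left : zpowers x ≤ zpowers x ⊔ K) (zpow_mem (mem_zpowers x) n)) ?_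
      refine (le_sup_right : K ≤ zpowers x ⊔ K) ?_
      have : (x ^ n)⁻¹ * q = (x ^ n)⁻¹ * (q * (x ^ n)⁻¹) * (x ^ n) := by group
      rw [this]
      exact (Subgroup.Normal.conj_mem' inferInstance _ hqK _)
    refine hnc ⟨⟨x, fun y => show y ∈ zpowers x from ?_⟩⟩
    rw [hng x hx]
    exact mem_top y
  have hVp : ∀ v : Q ⧸ K, v ^ p = 1 := by
    intro v
    obtain ⟨x, rfl⟩ := hsurj v
    rw [← map_pow]
    exact hmem' _ ((le_sup_left : powSub Q p ≤ K) (Subgroup.subset_closure ⟨x, rfl⟩))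
  haveI : Nontrivial (Q ⧸ K) := by
    rcases subsingleton_or_nontrivial (Q ⧸ K) with hs | hn
    · exact (hVcyc 1 (Subsingleton.elim _ _)).elim
    · exact hn
  obtain ⟨x, hx1⟩ := exists_ne (1 : Q ⧸ K)
  have hxt : zpowers x ≠ ⊤ := fun h => hVcyc x h
  obtain ⟨y, -, hy⟩ := SetLike.exists_of_lt hxt.lt_top
  have hy1 : y ≠ 1 := fun h => hy (h ▸ one_mem _)
  have hxy1 : x * y ≠ 1 := fun h => hy (show y ∈ zpowers x by
    rw [show y = x⁻¹ * (x * y) by group, h]; simpa using inv_mem (mem_zpowers x))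
  have hordp : ∀ v : Q ⧸ K, v ≠ 1 → orderOf v = p := by
    intro v hv
    rcases (Nat.Prime.eq_one_or_self_of_dvd Fact.out _
        (orderOf_dvd_of_pow_eq_one (hVp v))) with h | h
    · exact absurd (orderOf_eq_one_iff.mp h) hv
    · exact h
  have zmem : ∀ u v : Q ⧸ K, v ≠ 1 → v ∈ zpowers u → zpowers v = zpowers u := by
    intro u v hv huv
    have hu1 : u ≠ 1 := by
      rintro rfl
      simp only [zpowers_one_eq_bot, Subgroup.mem_bot] at huv
      exact hv huv
    refine Subgroup.eq_of_le_of_card_ge (zpowers_le.mpr huv) ?_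
    rw [Nat.card_zpowers, Nat.card_zpowers, hordp u hu1, hordp v hv]
  have hB1 : x * y ∉ zpowers x := fun h => hy (by
    have : y = x⁻¹ * (x * y) := by group
    rw [this]; exact mul_mem (inv_mem (mem_zpowers x)) h)
  have hAB : zpowers x ≠ zpowers y := fun h => hy (h ▸ mem_zpowers y)
  have hAC : zpowers x ≠ zpowers (x * y) := fun h => hB1 (h ▸ mem_zpowers (x * y))
  have hBC : zpowers y ≠ zpowers (x * y) := by
    intro h
    have hxB : x ∈ zpowers y := by
      have : x = (x * y) * y⁻¹ := by group
      rw [this]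
      exact mul_mem (h ▸ mem_zpowers (x * y)) (inv_mem (mem_zpowers y))
    have := zmem y x hx1 hxB
    exact hy (this ▸ mem_zpowers y)
  have hcomap_prop : ∀ v : Q ⧸ K, v ≠ 1 → zpowers v ≠ ⊤ →
      (K < comap π (zpowers v) ∧ comap π (zpowers v) ≠ ⊤) := by
    intro v hv hvt
    constructor
    · refine lt_of_le_of_ne (fun q hq => ?_) ?_
      · exact Subgroup.mem_comap.mpr (by rw [hmem' q hq]; exact one_mem _)
      · intro h
        obtain ⟨q, rfl⟩ := hsurj v
        have : q ∈ comap π (zpowers (π q)) := Subgroup.mem_comap.mpr (mem_zpowers _)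
        rw [← h] at this
        exact hv (hmem' q this)
    · intro h
      have : zpowers v = ⊤ := Subgroup.comap_injective hsurj (by rw [h, Subgroup.comap_top])
      exact hvt this
  have hinj : Function.Injective (comap π : Subgroup (Q ⧸ K) → Subgroup Q) :=
    Subgroup.comap_injective hsurj
  exact ⟨comap π (zpowers x), comap π (zpowers y), comap π (zpowers (x * y)),
    hcomap_prop x hx1 hxt,
    hcomap_prop y hy1 (fun h => hVcyc y h),
    hcomap_prop (x * y) hxy1 (fun h => hVcyc (x * y) h),
    fun h => hAB (hinj h), fun h => hAC (hinj h), fun h => hBC (hinj h)⟩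

/-! ### Arithmetic lemmas about powers in a normal Sylow subgroup -/

theorem pelem_mem {G : Type*} [Group G] [Finite G] {p : ℕ} [Fact p.Prime]
    (P : Sylow p G) (hs : Subsingleton (Sylow p G)) {x : G} {k : ℕ}
    (hx : x ^ p ^ k = 1) : x ∈ (P : Subgroup G) := by
  have hpg : IsPGroup p (Subgroup.zpowers x) := by
    rintro ⟨g, n, rfl⟩
    refine ⟨k, Subtype.ext ?_⟩
    push_cast
    rw [← zpow_natCast, ← zpow_mul, mul_comm, zpow_mul, zpow_natCast, hx, one_zpow]
  obtain ⟨Q, hQ⟩ := hpg.exists_le_sylow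
  have : Q = P := Subsingleton.elim _ _
  exact this ▸ hQ (Subgroup.mem_zpowers x)

theorem sylow_le_powSub {G : Type*} [Group G] [Finite G] {p : ℕ} [Fact p.Prime]
    (P : Sylow p G) {d : ℕ} (hpd : ¬ p ∣ d) : (P : Subgroup G) ≤ powSub G d := by
  intro x hx
  obtain ⟨k, hk⟩ := P.isPGroup' ⟨x, hx⟩
  have hk' : x ^ p ^ k = 1 := by
    have := congrArg (Subtype.val) hk
    simpa using this
  set o := orderOf x with ho
  have hod : o ∣ p ^ k := orderOf_dvd_of_pow_eq_one hk'
  have hco : Nat.Coprime d o :=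
    Nat.Coprime.coprime_dvd_right hod
      (Nat.Coprime.pow_right k (((Fact.out : p.Prime).coprime_iff_not_dvd.mpr hpd).symm))
  rcases eq_or_lt_of_le (Nat.one_le_iff_ne_zero.mpr (orderOf_pos x).ne') with h1 | h1
  · have : x = 1 := orderOf_eq_one_iff.mp h1.symm
    rw [this]; exact one_mem _
  · obtain ⟨c, -, hc⟩ := Nat.exists_mul_mod_eq_one_of_coprime hco h1
    have hxc : (x ^ d) ^ c = x := by
      rw [← pow_mul, ← pow_mod_orderOf, ← ho, hc, pow_one]
    have hbase : x ^ d ∈ powSub G d := Subgroup.subset_closure ⟨x, rfl⟩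
    rw [← hxc]
    exact pow_mem hbase c

theorem pow_d_eq {G : Type*} [Group G] [Finite G] {p : ℕ} [Fact p.Prime]
    (P : Sylow p G) (hs : Subsingleton (Sylow p G)) {d : ℕ} (hpd : p ∣ d)
    {g : G} (hgd : g ^ d ∈ (P : Subgroup G)) : ∃ x ∈ (P : Subgroup G), x ^ p = g ^ d := by
  set n := orderOf g with hn
  have hn0 : n ≠ 0 := (orderOf_pos g).ne'
  set k := n.factorization p with hkdef
  set m := n / p ^ k with hmdef
  have hnm : p ^ k * m = n := Nat.ordProj_mul_ordCompl_eq_self n p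
  have hpm : ¬ p ∣ m := Nat.not_dvd_ordCompl Fact.out hn0
  obtain ⟨j, hj⟩ := P.isPGroup' ⟨g ^ d, hgd⟩
  have hj' : (g ^ d) ^ p ^ j = 1 := by
    have := congrArg (Subtype.val) hj
    simpa using this
  have ho1 : orderOf (g ^ d) ∣ p ^ j := orderOf_dvd_of_pow_eq_one hj'
  have ho2 : orderOf (g ^ d) ∣ n := orderOf_dvd_of_pow_eq_one (by
    rw [← pow_mul, mul_comm, pow_mul, hn, pow_orderOf_eq_one, one_pow])
  obtain ⟨t, ht, hot⟩ := (Nat.dvd_prime_pow Fact.out).mp ho1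
  have htk : t ≤ k := by
    refine (Nat.Prime.pow_dvd_iff_le_factorization Fact.out hn0).mp ?_
    rw [← hot]
    exact ho2
  have hgd1 : (g ^ d) ^ p ^ k = 1 := by
    refine orderOf_dvd_iff_pow_eq_one.mp ?_
    rw [hot]
    exact pow_dvd_pow p htk
  have hnd : n ∣ d * p ^ k := orderOf_dvd_iff_pow_eq_one.mpr (by rw [pow_mul]; exact hgd1)
  have hmd : m ∣ d := by
    have h1 : p ^ k * m ∣ p ^ k * d := by
      rw [hnm, mul_comm (p ^ k) d]
      exact hnd
    exact (mul_dvd_mul_iff_left (pow_pos (Fact.out : p.Prime).pos k).ne').mp h1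
  have hmpd : m * p ∣ d :=
    Nat.Coprime.mul_dvd_of_dvd_of_dvd
      (((Fact.out : p.Prime).coprime_iff_not_dvd.mpr hpm).symm) hmd hpd
  obtain ⟨w, hw⟩ := hmpd
  refine ⟨g ^ (m * w), ?_, ?_⟩
  · refine pelem_mem P hs (k := k) ?_
    rw [← pow_mul]
    have : m * w * p ^ k = n * w := by rw [← hnm]; ring
    rw [this, pow_mul, hn, pow_orderOf_eq_one, one_pow]
  · rw [← pow_mul, hw]
    ring_nf

/-! ### Case B : a normal non-cyclic Sylow subgroup -/

theorem case_normal_sylow {G : Type*} [Group G] [Finite G] (p : ℕ) [Fact p.Prime]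
    (P : Sylow p G) (hPn : (P : Subgroup G).Normal)
    (hnc : ¬ IsCyclic ↥(P : Subgroup G)) : 3 ≤ nps G := by
  haveI hs : Subsingleton (Sylow p G) := (Sylow.unique_of_normal P hPn).instSubsingleton
  obtain ⟨N₁, N₂, N₃, h1, h2, h3, h12, h13, h23⟩ := pgroup_three (P.isPGroup') hnc
  set Q := ↥(P : Subgroup G)
  set KQ : Subgroup Q := powSub Q p ⊔ commutator Q with hKQ
  have htop : Subgroup.map (P : Subgroup G).subtype ⊤ = (P : Subgroup G) := by
    rw [← MonoidHom.range_eq_map]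
    exact Subgroup.range_subtype _
  have hsubinj := Subgroup.map_injective (Subgroup.subtype_injective (P : Subgroup G))
  have main : ∀ N : Subgroup Q, KQ < N → N ≠ ⊤ →
      IsNonpower (Subgroup.map (P : Subgroup G).subtype N) := by
    intro N hlt hne
    rintro ⟨d, hd0, hNG⟩
    have hle : Subgroup.map (P : Subgroup G).subtype N ≤ (P : Subgroup G) :=
      Subgroup.map_subtype_le N
    by_cases hpd : p ∣ d
    · -- G^d is contained in the image of KQ
      have hsub : powSub G d ≤ Subgroup.map (P : Subgroup G).subtype KQ := by
        rw [powSub]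
        refine (Subgroup.closure_le _).mpr ?_
        rintro _ ⟨g, rfl⟩
        have hgP : g ^ d ∈ (P : Subgroup G) := by
          refine hle ?_
          rw [hNG]
          exact Subgroup.subset_closure ⟨g, rfl⟩
        obtain ⟨x, hxP, hxp⟩ := pow_d_eq P hs hpd hgP
        refine ⟨(⟨x, hxP⟩ : Q) ^ p, ?_, by simpa using hxp⟩
        exact (le_sup_left : powSub Q p ≤ KQ) (Subgroup.subset_closure ⟨⟨x, hxP⟩, rfl⟩)
      have hKN : Subgroup.map (P : Subgroup G).subtype KQ ≤
          Subgroup.map (P : Subgroup G).subtype N := Subgroup.map_mono hlt.le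
      have heq : Subgroup.map (P : Subgroup G).subtype KQ =
          Subgroup.map (P : Subgroup G).subtype N := by
        refine le_antisymm hKN ?_
        rw [hNG]
        exact hsub
      exact hlt.ne (hsubinj heq)
    · have hPle : (P : Subgroup G) ≤ powSub G d := sylow_le_powSub P hpd
      have heq : Subgroup.map (P : Subgroup G).subtype N = (P : Subgroup G) := by
        refine le_antisymm hle ?_
        rw [hNG]
        exact hPle
      exact hne (hsubinj (heq.trans htop.symm))
  exact three_distinct_nps
    (main N₁ h1.1 h1.2) (main N₂ h2.1 h2.2) (main N₃ h3.1 h3.2)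
    (fun h => h12 (hsubinj h)) (fun h => h13 (hsubinj h)) (fun h => h23 (hsubinj h))

end Aux

theorem noncyclic_three_nonpower (G : Type*) [Group G] [Finite G]
    (h : ¬ IsCyclic G) : 3 ≤ nps G := by
  by_cases hA : ∀ (p : ℕ) (_ : Fact p.Prime) (P : Sylow p G), (P : Subgroup G).Normal
  · by_cases hC : ∀ (p : ℕ) (_ : Fact p.Prime) (P : Sylow p G), IsCyclic ↥(P : Subgroup G)
    · exact absurd (cyclic_of_sylow hA hC) h
    · push_neg at hC
      obtain ⟨p, hp, P, hPc⟩ := hC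
      haveI := hp
      exact case_normal_sylow p P (hA p hp P) hPc
  · push_neg at hA
    obtain ⟨p, hp, P, hPn⟩ := hA
    haveI := hp
    exact case_nonnormal_sylow p P hPn
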